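/- For an irreducible finite Markov chain (B, Prob_B) started from any initial distribution ν, the empirical frequency vector Freq_n converges almost surely to the invariant distribution I_B: P^ν[lim_n Freq_n = I_B] = 1. -/

import Mathlib

open scoped NNReal ENNReal
open MeasureTheory Filter Finset

set_option linter.unusedSectionVars false
set_option maxHeartbeats 1600000

namespace FreqAux

section Cylinders

variable {B : Type*} [Fintype B] [Nonempty B] [DecidableEq B]
    [MeasurableSpace B] [MeasurableSingletonClass B]


noncomputable def wgt (P : Matrix B B ℝ≥0) (ν : B → ℝ≥0) (n : ℕ) (q : Fin (n+1) → B) : ℝ≥0∞ :=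
  (ν (q 0) : ℝ≥0∞) * ∏ i : Fin n, (P (q i.castSucc) (q i.succ) : ℝ≥0∞)

def cyl (n : ℕ) (q : Fin (n+1) → B) : Set (ℕ → B) := {w | ∀ i : Fin (n+1), w i = q i}

lemma measurable_cyl (n : ℕ) (q : Fin (n+1) → B) : MeasurableSet (cyl n q) := by
  have : cyl n q = ⋂ i : Fin (n+1), (fun w : ℕ → B => w i) ⁻¹' {q i} := by
    ext w; simp [cyl]
  rw [this]
  exact MeasurableSet.iInter fun i =>
    (measurable_pi_apply (i : ℕ)).comp measurable_id (measurableSet_singleton (q i))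

lemma measure_cyl (P : Matrix B B ℝ≥0) (ν : B → ℝ≥0) (μ : MeasureTheory.Measure (ℕ → B))
    (hcyl : ∀ (k : ℕ) (p : ℕ → B),
      μ {w | ∀ i ≤ k, w i = p i} =
        (ν (p 0) : ℝ≥0∞) * ∏ i ∈ Finset.range k, (P (p i) (p (i + 1)) : ℝ≥0∞))
    (n : ℕ) (q : Fin (n+1) → B) : μ (cyl n q) = wgt P ν n q := by
  set p : ℕ → B := fun i => if h : i < n+1 then q ⟨i, h⟩ else q 0 with hp
  have hpq : ∀ i : Fin (n+1), p i = q i := by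
    intro i; simp only [hp]; rw [dif_pos i.isLt]
  have hset : {w : ℕ → B | ∀ i ≤ n, w i = p i} = cyl n q := by
    ext w
    constructor
    · intro h i; rw [← hpq i]; exact h i (Nat.lt_succ_iff.mp i.isLt)
    · intro h i hi
      have h1 := h ⟨i, Nat.lt_succ_of_le hi⟩
      have h2 := hpq ⟨i, Nat.lt_succ_of_le hi⟩
      simp only [Fin.val_mk] at h1 h2
      rw [h1, h2]
  rw [← hset, hcyl n p]
  have h0 : p 0 = q 0 := hpq 0
  have hprod : ∏ i ∈ Finset.range n, (P (p i) (p (i + 1)) : ℝ≥0∞)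
      = ∏ i : Fin n, (P (q i.castSucc) (q i.succ) : ℝ≥0∞) := by
    rw [← Fin.prod_univ_eq_prod_range]
    apply Finset.prod_congr rfl
    intro i _
    have h1 := hpq i.castSucc
    have h2 := hpq i.succ
    simp only [Fin.coe_castSucc, Fin.val_succ] at h1 h2
    rw [h1, h2]
  rw [h0, hprod, wgt]

lemma measure_event (μ : MeasureTheory.Measure (ℕ → B)) (n : ℕ)
    (Φ : (Fin (n+1) → B) → Prop) [DecidablePred Φ] :
    μ {w | Φ (fun i => w i.val)} = ∑ q ∈ Finset.univ.filter Φ, μ (cyl n q) := by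
  have hset : {w : ℕ → B | Φ (fun i => w i.val)} = ⋃ q ∈ Finset.univ.filter Φ, cyl n q := by
    ext w
    simp only [Set.mem_setOf_eq, Set.mem_iUnion, Finset.mem_filter, Finset.mem_univ, true_and]
    constructor
    · intro h
      exact ⟨fun i => w i.val, h, fun i => rfl⟩
    · rintro ⟨q, hq, hw⟩
      have : (fun i : Fin (n+1) => w i.val) = q := funext fun i => hw i
      rw [this]; exact hq
  rw [hset]
  rw [measure_biUnion_finset ?_ (fun q _ => measurable_cyl n q)]
  intro q _ q' _ hne
  simp only [Function.onFun]
  rw [Set.disjoint_left]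
  intro w hw hw'
  exact hne (funext fun i => (hw i).symm.trans (hw' i))

lemma wgt_snoc (P : Matrix B B ℝ≥0) (ν : B → ℝ≥0) (n : ℕ) (q : Fin (n+1) → B) (t : B) :
    wgt P ν (n+1) (Fin.snoc q t) = wgt P ν n q * (P (q (Fin.last n)) t : ℝ≥0∞) := by
  unfold wgt
  rw [Fin.prod_univ_castSucc]
  have h0 : (Fin.snoc q t : Fin (n+2) → B) 0 = q 0 := by
    have h : (0 : Fin (n+2)) = Fin.castSucc (0 : Fin (n+1)) := rfl
    rw [h, Fin.snoc_castSucc]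
  have h1 : ∀ i : Fin n,
      (Fin.snoc q t : Fin (n+2) → B) (i.castSucc).castSucc = q i.castSucc := by
    intro i; rw [Fin.snoc_castSucc]
  have h2 : ∀ i : Fin n,
      (Fin.snoc q t : Fin (n+2) → B) (i.castSucc).succ = q i.succ := by
    intro i; rw [Fin.succ_castSucc, Fin.snoc_castSucc]
  have h3 : (Fin.snoc q t : Fin (n+2) → B) ((Fin.last n).castSucc) = q (Fin.last n) :=
    Fin.snoc_castSucc _ _ _
  have h4 : (Fin.snoc q t : Fin (n+2) → B) ((Fin.last n).succ) = t := by
    rw [Fin.succ_last, Fin.snoc_last]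
  simp only [h0, h1, h2, h3, h4]
  ring

lemma sum_wgt_last (P : Matrix B B ℝ≥0) (ν : B → ℝ≥0) :
    ∀ (n : ℕ) (s : B),
      ∑ q ∈ Finset.univ.filter (fun q : Fin (n+1) → B => q (Fin.last n) = s), wgt P ν n q
        = ((Matrix.vecMul ν (P^n)) s : ℝ≥0∞) := by
  intro n
  induction n with
  | zero =>
    intro s
    rw [pow_zero, Matrix.vecMul_one]
    rw [Finset.sum_filter]
    have he := Fintype.sum_equiv (Equiv.funUnique (Fin 1) B)
      (fun q : Fin 1 → B => if q (Fin.last 0) = s then wgt P ν 0 q else 0)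
      (fun b : B => if b = s then (ν b : ℝ≥0∞) else 0) ?_
    · rw [he, Finset.sum_ite_eq' Finset.univ s]
      simp
    · intro q
      have h0 : Fin.last 0 = 0 := by decide
      have h2 : (Equiv.funUnique (Fin 1) B) q = q 0 := rfl
      simp only [h0, h2]
      by_cases h : q 0 = s
      · rw [if_pos h, if_pos h]
        simp [wgt]
      · rw [if_neg h, if_neg h]
  | succ n ih =>
    intro s
    have key : ∑ q ∈ Finset.univ.filter (fun q : Fin (n+2) → B => q (Fin.last (n+1)) = s),
        wgt P ν (n+1) q
        = ∑ u : B, ((Matrix.vecMul ν (P^n)) u : ℝ≥0∞) * (P u s : ℝ≥0∞) := by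
      rw [Finset.sum_filter]
      have he := Fintype.sum_equiv (Fin.snocEquiv (fun _ : Fin (n+2) => B))
        (fun p : B × (Fin (n+1) → B) =>
          if p.1 = s then wgt P ν n p.2 * (P (p.2 (Fin.last n)) p.1 : ℝ≥0∞) else 0)
        (fun q : Fin (n+2) → B => if q (Fin.last (n+1)) = s then wgt P ν (n+1) q else 0)
        (fun p => by
          show _ = if (Fin.snoc p.2 p.1 : Fin (n+2) → B) (Fin.last (n+1)) = s
            then wgt P ν (n+1) (Fin.snoc p.2 p.1) else 0
          rw [Fin.snoc_last, wgt_snoc])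
      rw [← he, Fintype.sum_prod_type]
      rw [Finset.sum_comm]
      have collapse : ∀ q : Fin (n+1) → B,
          (∑ t : B, if t = s then wgt P ν n q * (P (q (Fin.last n)) t : ℝ≥0∞) else 0)
          = wgt P ν n q * (P (q (Fin.last n)) s : ℝ≥0∞) := by
        intro q
        rw [Finset.sum_ite_eq' Finset.univ s]
        simp
      simp only [collapse]
      rw [← Finset.sum_fiberwise Finset.univ (fun q : Fin (n+1) → B => q (Fin.last n))
        (fun q => wgt P ν n q * (P (q (Fin.last n)) s : ℝ≥0∞))]
      apply Finset.sum_congr rfl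
      intro u _
      rw [← ih u, Finset.sum_mul]
      apply Finset.sum_congr rfl
      intro q hq
      rw [Finset.mem_filter] at hq
      rw [hq.2]
    rw [key, pow_succ, ← Matrix.vecMul_vecMul]
    have : (Matrix.vecMul (Matrix.vecMul ν (P^n)) P) s
        = ∑ u : B, (Matrix.vecMul ν (P^n)) u * P u s := by
      simp [Matrix.vecMul, dotProduct]
    rw [this, ENNReal.coe_finset_sum]
    apply Finset.sum_congr rfl
    intro u _
    rw [ENNReal.coe_mul]

lemma sum_wgt_pair (P : Matrix B B ℝ≥0) (ν : B → ℝ≥0) :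
    ∀ (k n : ℕ) (s t : B),
      ∑ q ∈ Finset.univ.filter (fun q : Fin (n+k+1) → B =>
          q ⟨n, by omega⟩ = s ∧ q (Fin.last (n+k)) = t), wgt P ν (n+k) q
      = (∑ q ∈ Finset.univ.filter (fun q : Fin (n+1) → B => q (Fin.last n) = s), wgt P ν n q)
          * ((P^k) s t : ℝ≥0∞) := by
  intro k
  induction k with
  | zero =>
    intro n s t
    have hnl : (⟨n, by omega⟩ : Fin (n+0+1)) = Fin.last (n+0) := rfl
    by_cases h : t = s
    · subst h
      rw [pow_zero, Matrix.one_apply_eq, ENNReal.coe_one, mul_one]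
      apply Finset.sum_congr _ (fun _ _ => rfl)
      apply Finset.filter_congr
      intro q _
      simp only [hnl, and_self, Nat.add_zero]
    · rw [pow_zero, Matrix.one_apply_ne' h, ENNReal.coe_zero, mul_zero]
      rw [Finset.sum_filter]
      apply Finset.sum_eq_zero
      intro q _
      rw [if_neg]
      rintro ⟨h1, h2⟩
      rw [hnl] at h1
      exact h (h2.symm.trans h1)
  | succ k ih =>
    intro n s t
    show (∑ q ∈ Finset.univ.filter (fun q : Fin (n+k+1+1) → B =>
          q ⟨n, by omega⟩ = s ∧ q (Fin.last (n+k+1)) = t), wgt P ν (n+k+1) q) = _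
    have key : ∑ q ∈ Finset.univ.filter (fun q : Fin (n+k+1+1) → B =>
          q ⟨n, by omega⟩ = s ∧ q (Fin.last (n+k+1)) = t), wgt P ν (n+k+1) q
        = ∑ v : B, ((∑ q ∈ Finset.univ.filter (fun q : Fin (n+1) → B =>
            q (Fin.last n) = s), wgt P ν n q) * ((P^k) s v : ℝ≥0∞)) * (P v t : ℝ≥0∞) := by
      rw [Finset.sum_filter]
      have he := Fintype.sum_equiv (Fin.snocEquiv (fun _ : Fin (n+k+2) => B))
        (fun p : B × (Fin (n+k+1) → B) =>
          if p.2 ⟨n, by omega⟩ = s ∧ p.1 = t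
            then wgt P ν (n+k) p.2 * (P (p.2 (Fin.last (n+k))) p.1 : ℝ≥0∞) else 0)
        (fun q : Fin (n+k+2) → B =>
          if q ⟨n, by omega⟩ = s ∧ q (Fin.last (n+k+1)) = t then wgt P ν (n+k+1) q else 0)
        (fun p => by
          show _ = if (Fin.snoc p.2 p.1 : Fin (n+k+2) → B) ⟨n, by omega⟩ = s ∧
              (Fin.snoc p.2 p.1 : Fin (n+k+2) → B) (Fin.last (n+k+1)) = t
            then wgt P ν (n+k+1) (Fin.snoc p.2 p.1) else 0
          rw [Fin.snoc_last, wgt_snoc,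
            show (⟨n, by omega⟩ : Fin (n+k+2)) = Fin.castSucc (⟨n, by omega⟩ : Fin (n+k+1)) from rfl,
            Fin.snoc_castSucc])
      rw [← he, Fintype.sum_prod_type]
      have hsplit : ∀ (u : B) (q : Fin (n+k+1) → B),
          (if q ⟨n, by omega⟩ = s ∧ u = t
            then wgt P ν (n+k) q * (P (q (Fin.last (n+k))) u : ℝ≥0∞) else 0)
          = if u = t then (if q ⟨n, by omega⟩ = s
              then wgt P ν (n+k) q * (P (q (Fin.last (n+k))) u : ℝ≥0∞) else 0) else 0 := by
        intro u q
        by_cases hu : u = t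
        · by_cases hA : q ⟨n, by omega⟩ = s
          · rw [if_pos ⟨hA, hu⟩, if_pos hu, if_pos hA]
          · rw [if_neg (by tauto), if_pos hu, if_neg hA]
        · rw [if_neg (by tauto), if_neg hu]
      simp only [hsplit]
      rw [Finset.sum_comm]
      have hcoll : ∀ q : Fin (n+k+1) → B,
          (∑ u : B, if u = t then (if q ⟨n, by omega⟩ = s
              then wgt P ν (n+k) q * (P (q (Fin.last (n+k))) u : ℝ≥0∞) else 0) else 0)
          = if q ⟨n, by omega⟩ = s
              then wgt P ν (n+k) q * (P (q (Fin.last (n+k))) t : ℝ≥0∞) else 0 := by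
        intro q
        rw [Finset.sum_ite_eq' Finset.univ t
          (fun u => if q ⟨n, by omega⟩ = s
              then wgt P ν (n+k) q * (P (q (Fin.last (n+k))) u : ℝ≥0∞) else 0)]
        simp
      simp only [hcoll]
      rw [← Finset.sum_fiberwise Finset.univ (fun q : Fin (n+k+1) → B => q (Fin.last (n+k)))
        (fun q => if q ⟨n, by omega⟩ = s
              then wgt P ν (n+k) q * (P (q (Fin.last (n+k))) t : ℝ≥0∞) else 0)]
      apply Finset.sum_congr rfl
      intro v _
      have hterm : ∀ q ∈ Finset.univ.filter (fun q : Fin (n+k+1) → B => q (Fin.last (n+k)) = v),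
          (if q ⟨n, by omega⟩ = s
              then wgt P ν (n+k) q * (P (q (Fin.last (n+k))) t : ℝ≥0∞) else 0)
          = (if q ⟨n, by omega⟩ = s then wgt P ν (n+k) q else 0) * (P v t : ℝ≥0∞) := by
        intro q hq
        rw [Finset.mem_filter] at hq
        rw [hq.2]
        split
        · rfl
        · rw [zero_mul]
      rw [Finset.sum_congr rfl hterm, ← Finset.sum_mul]
      congr 1
      rw [← Finset.sum_filter, Finset.filter_filter]
      rw [show (Finset.univ.filter fun a : Fin (n+k+1) → B =>
          a (Fin.last (n+k)) = v ∧ a ⟨n, by omega⟩ = s)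
        = Finset.univ.filter (fun a => a ⟨n, by omega⟩ = s ∧ a (Fin.last (n+k)) = v) from
        Finset.filter_congr (fun q _ => by tauto)]
      exact ih n s v
    rw [key]
    have : ((P^(k+1)) s t : ℝ≥0∞) = ∑ v : B, ((P^k) s v : ℝ≥0∞) * (P v t : ℝ≥0∞) := by
      rw [pow_succ, Matrix.mul_apply, ENNReal.coe_finset_sum]
      exact Finset.sum_congr rfl (fun v _ => ENNReal.coe_mul _ _)
    rw [this, Finset.mul_sum]
    exact Finset.sum_congr rfl (fun v _ => by ring)


variable (P : Matrix B B ℝ≥0) (ν : B → ℝ≥0) (μ : MeasureTheory.Measure (ℕ → B))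

lemma measure_coord
    (hcyl : ∀ (k : ℕ) (p : ℕ → B),
      μ {w | ∀ i ≤ k, w i = p i} =
        (ν (p 0) : ℝ≥0∞) * ∏ i ∈ Finset.range k, (P (p i) (p (i + 1)) : ℝ≥0∞))
    (n : ℕ) (s : B) :
    μ {w : ℕ → B | w n = s} = ((Matrix.vecMul ν (P^n)) s : ℝ≥0∞) := by
  have h := measure_event μ n (fun q : Fin (n+1) → B => q (Fin.last n) = s)
  have hset : {w : ℕ → B | (fun q : Fin (n+1) → B => q (Fin.last n) = s) (fun i => w i.val)}
      = {w : ℕ → B | w n = s} := rfl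
  rw [hset] at h
  rw [h, Finset.sum_congr rfl (fun q _ => measure_cyl P ν μ hcyl n q)]
  exact sum_wgt_last P ν n s

lemma measure_pair
    (hcyl : ∀ (k : ℕ) (p : ℕ → B),
      μ {w | ∀ i ≤ k, w i = p i} =
        (ν (p 0) : ℝ≥0∞) * ∏ i ∈ Finset.range k, (P (p i) (p (i + 1)) : ℝ≥0∞))
    (n k : ℕ) (s t : B) :
    μ {w : ℕ → B | w n = s ∧ w (n+k) = t}
      = ((Matrix.vecMul ν (P^n)) s : ℝ≥0∞) * ((P^k) s t : ℝ≥0∞) := by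
  have h := measure_event μ (n+k) (fun q : Fin (n+k+1) → B =>
    q ⟨n, by omega⟩ = s ∧ q (Fin.last (n+k)) = t)
  have hset : {w : ℕ → B | (fun q : Fin (n+k+1) → B =>
      q ⟨n, by omega⟩ = s ∧ q (Fin.last (n+k)) = t) (fun i => w i.val)}
      = {w : ℕ → B | w n = s ∧ w (n+k) = t} := rfl
  rw [hset] at h
  rw [h, Finset.sum_congr rfl (fun q _ => measure_cyl P ν μ hcyl (n+k) q),
    sum_wgt_pair P ν k n s t, sum_wgt_last P ν n s]


end Cylinders

section Mat
variable {B : Type*} [Fintype B] [Nonempty B] [DecidableEq B]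


section MatrixPart

variable (Q : Matrix B B ℝ) (J : B → ℝ)

lemma pow_nonneg_entries (hQ0 : ∀ s t, 0 ≤ Q s t) : ∀ (n : ℕ) (s t : B), 0 ≤ (Q^n) s t := by
  intro n
  induction n with
  | zero => intro s t; rw [pow_zero]; by_cases h : s = t <;>
      simp [Matrix.one_apply, h]
  | succ n ih =>
    intro s t
    rw [pow_succ, Matrix.mul_apply]
    exact Finset.sum_nonneg fun u _ => mul_nonneg (ih s u) (hQ0 u t)

lemma pow_row_sum (hQ1 : ∀ s, ∑ t, Q s t = 1) : ∀ (n : ℕ) (s : B), ∑ t, (Q^n) s t = 1 := by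
  intro n
  induction n with
  | zero => intro s; simp [Matrix.one_apply]
  | succ n ih =>
    intro s
    simp only [pow_succ, Matrix.mul_apply]
    rw [Finset.sum_comm]
    rw [Finset.sum_congr rfl (fun u _ => by rw [← Finset.mul_sum, hQ1 u])]
    simp only [mul_one]
    exact ih s

lemma pow_le_one (hQ0 : ∀ s t, 0 ≤ Q s t) (hQ1 : ∀ s, ∑ t, Q s t = 1) :
    ∀ (n : ℕ) (s t : B), (Q^n) s t ≤ 1 := by
  intro n s t
  calc (Q^n) s t ≤ ∑ u, (Q^n) s u :=
        Finset.single_le_sum (fun u _ => pow_nonneg_entries Q hQ0 n s u) (Finset.mem_univ t)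
    _ = 1 := pow_row_sum Q hQ1 n s

/-- the rank-one invariant matrix -/
noncomputable def PiM : Matrix B B ℝ := Matrix.of (fun _ t => J t)

lemma PiM_mul_Q (hJinv : ∀ t, ∑ s, J s * Q s t = J t) : PiM (B := B) J * Q = PiM J := by
  ext s t; simp [PiM, Matrix.mul_apply, hJinv t]

lemma Q_mul_PiM (hQ1 : ∀ s, ∑ t, Q s t = 1) : Q * PiM (B := B) J = PiM J := by
  ext s t
  simp only [PiM, Matrix.mul_apply, Matrix.of_apply]
  rw [← Finset.sum_mul, hQ1 s, one_mul]

lemma PiM_mul_PiM (hJ1 : ∑ s, J s = 1) : PiM (B := B) J * PiM J = PiM J := by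
  ext s t
  simp only [PiM, Matrix.mul_apply, Matrix.of_apply]
  rw [← Finset.sum_mul, hJ1, one_mul]

lemma PiM_mul_pow (hJinv : ∀ t, ∑ s, J s * Q s t = J t) :
    ∀ n : ℕ, PiM (B := B) J * Q^n = PiM J := by
  intro n
  induction n with
  | zero => rw [pow_zero, mul_one]
  | succ n ih => rw [pow_succ, ← mul_assoc, ih, PiM_mul_Q Q J hJinv]

lemma harmonic_const (hQ0 : ∀ s t, 0 ≤ Q s t) (hQ1 : ∀ s, ∑ t, Q s t = 1)
    (hQirr : ∀ s t, ∃ n, 0 < (Q^n) s t)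
    (x : B → ℝ) (hx : Q.mulVec x = x) : ∀ s t : B, x s = x t := by
  have hpow : ∀ n, (Q^n).mulVec x = x := by
    intro n
    induction n with
    | zero => rw [pow_zero, Matrix.one_mulVec]
    | succ n ih => rw [pow_succ', ← Matrix.mulVec_mulVec, ih, hx]
  obtain ⟨s0, _, hs0⟩ := Finset.exists_max_image (Finset.univ : Finset B) x ⟨Classical.arbitrary B, Finset.mem_univ _⟩
  have hmax : ∀ t : B, x t = x s0 := by
    intro t
    obtain ⟨n, hn⟩ := hQirr s0 t
    have hrow : ∑ u, (Q^n) s0 u * (x s0 - x u) = 0 := by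
      have h1 : ∑ u, (Q^n) s0 u * x u = x s0 := by
        have := congrFun (hpow n) s0
        simpa [Matrix.mulVec, dotProduct] using this
      have h2 : ∑ u, (Q^n) s0 u * x s0 = x s0 := by
        rw [← Finset.sum_mul, pow_row_sum Q hQ1 n s0, one_mul]
      rw [Finset.sum_congr rfl (fun u _ => mul_sub ((Q^n) s0 u) (x s0) (x u)),
        Finset.sum_sub_distrib, h1, h2, sub_self]
    have hterm := (Finset.sum_eq_zero_iff_of_nonneg (fun u _ =>
      mul_nonneg (pow_nonneg_entries Q hQ0 n s0 u)
        (sub_nonneg.mpr (hs0 u (Finset.mem_univ u))))).mp hrow t (Finset.mem_univ t)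
    have := mul_eq_zero.mp hterm
    rcases this with h | h
    · exact absurd h (ne_of_gt hn)
    · linarith [sub_eq_zero.mp h]
  intro s t; rw [hmax s, hmax t]

lemma fundamental_bound (hQ0 : ∀ s t, 0 ≤ Q s t) (hQ1 : ∀ s, ∑ t, Q s t = 1)
    (hQirr : ∀ s t, ∃ n, 0 < (Q^n) s t)
    (hJ1 : ∑ s, J s = 1) (hJinv : ∀ t, ∑ s, J s * Q s t = J t) :
    ∃ C : ℝ, 0 ≤ C ∧ ∀ (m : ℕ) (s t : B), |∑ k ∈ Finset.range m, ((Q^k) s t - J t)| ≤ C := by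
  set A : Matrix B B ℝ := 1 - Q + PiM J with hA
  -- kernel of A is trivial
  have hker : ∀ x : B → ℝ, A.mulVec x = 0 → x = 0 := by
    intro x hx
    have hPiA : PiM (B := B) J * A = PiM J := by
      rw [hA, mul_add, mul_sub, mul_one, PiM_mul_Q Q J hJinv, PiM_mul_PiM J hJ1]
      abel
    have hPix0 : (PiM (B := B) J).mulVec x = 0 := by
      have h1 : (PiM (B := B) J).mulVec (A.mulVec x) = (PiM J).mulVec x := by
        rw [Matrix.mulVec_mulVec, hPiA]
      rw [hx, Matrix.mulVec_zero] at h1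
      exact h1.symm
    have hsum0 : ∑ u, J u * x u = 0 := by
      have := congrFun hPix0 (Classical.arbitrary B)
      simpa [PiM, Matrix.mulVec, dotProduct] using this
    have hharm : Q.mulVec x = x := by
      have hexp : A.mulVec x = x - Q.mulVec x + (PiM (B := B) J).mulVec x := by
        rw [hA, Matrix.add_mulVec, Matrix.sub_mulVec, Matrix.one_mulVec]
      rw [hexp, hPix0, add_zero] at hx
      have := sub_eq_zero.mp hx
      exact this.symm
    have hconst := harmonic_const Q hQ0 hQ1 hQirr x hharm
    -- x is constant, and its Pi-average is 0, so x = 0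
    funext t
    have hxc : ∀ u, x u = x t := fun u => hconst u t
    have : ∑ u, J u * x u = x t := by
      rw [Finset.sum_congr rfl (fun u _ => by rw [hxc u]), ← Finset.sum_mul, hJ1, one_mul]
    rw [hsum0] at this
    exact this.symm
  have hdet : IsUnit A.det := by
    rw [isUnit_iff_ne_zero]
    intro h0
    obtain ⟨v, hv, hAv⟩ := (Matrix.exists_mulVec_eq_zero_iff).mpr h0
    exact hv (hker v hAv)
  set Z : Matrix B B ℝ := A⁻¹ with hZ
  have hZA : Z * A = 1 := Matrix.nonsing_inv_mul A hdet
  -- telescoping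
  have htel : ∀ m : ℕ, A * (∑ k ∈ Finset.range m, (Q^k - PiM J)) = 1 - Q^m := by
    intro m
    induction m with
    | zero => simp
    | succ m ih =>
      rw [Finset.sum_range_succ, mul_add, ih]
      have hstep : A * (Q^m - PiM (B := B) J) = Q^m - Q^(m+1) := by
        rw [hA, add_mul, sub_mul, one_mul, mul_sub, mul_sub,
          Q_mul_PiM Q J hQ1, PiM_mul_pow Q J hJinv m, PiM_mul_PiM J hJ1, ← pow_succ']
        abel
      rw [hstep]
      abel
  have hSm : ∀ m : ℕ, (∑ k ∈ Finset.range m, (Q^k - PiM J)) = Z * (1 - Q^m) := by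
    intro m
    calc (∑ k ∈ Finset.range m, (Q^k - PiM J))
        = (Z * A) * (∑ k ∈ Finset.range m, (Q^k - PiM J)) := by rw [hZA, one_mul]
      _ = Z * (1 - Q^m) := by rw [mul_assoc, htel m]
  refine ⟨∑ a, ∑ b, |Z a b|, Finset.sum_nonneg fun a _ => Finset.sum_nonneg fun b _ => abs_nonneg _, ?_⟩
  intro m s t
  have hentry : (∑ k ∈ Finset.range m, ((Q^k) s t - J t)) = (Z * (1 - Q^m)) s t := by
    rw [← hSm m]
    rw [Matrix.sum_apply]
    apply Finset.sum_congr rfl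
    intro k _
    rw [Matrix.sub_apply]
    rfl
  rw [hentry, Matrix.mul_apply]
  calc |∑ u, Z s u * (1 - Q^m) u t| ≤ ∑ u, |Z s u * (1 - Q^m) u t| :=
        Finset.abs_sum_le_sum_abs _ _
    _ ≤ ∑ u, |Z s u| := by
        apply Finset.sum_le_sum
        intro u _
        rw [abs_mul]
        have h1 : |(1 - Q^m) u t| ≤ 1 := by
          rw [Matrix.sub_apply, Matrix.one_apply]
          have h2 := pow_nonneg_entries Q hQ0 m u t
          have h3 := pow_le_one Q hQ0 hQ1 m u t
          by_cases h : u = t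
          · rw [if_pos h, abs_le]; constructor <;> linarith
          · rw [if_neg h, abs_le]; constructor <;> linarith
        calc |Z s u| * |(1 - Q^m) u t| ≤ |Z s u| * 1 :=
              mul_le_mul_of_nonneg_left h1 (abs_nonneg _)
          _ = |Z s u| := mul_one _
    _ ≤ ∑ a, ∑ b, |Z a b| :=
        Finset.single_le_sum (f := fun a => ∑ b, |Z a b|)
          (fun a _ => Finset.sum_nonneg fun b _ => abs_nonneg _) (Finset.mem_univ s)

end MatrixPart


end Mat


lemma sym_double (f : ℕ → ℕ → ℝ) (hsym : ∀ i j, f i j = f j i) :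
    ∀ n, ∑ i ∈ range n, ∑ j ∈ range n, f i j
      = (∑ i ∈ range n, f i i) + 2 * ∑ i ∈ range n, ∑ j ∈ range i, f j i := by
  intro n
  induction n with
  | zero => simp
  | succ n ih =>
    rw [Finset.sum_range_succ]
    rw [Finset.sum_congr rfl (fun i (_ : i ∈ range n) => Finset.sum_range_succ (f i) n)]
    rw [Finset.sum_add_distrib, ih, Finset.sum_range_succ (fun j => f n j) n]
    rw [Finset.sum_range_succ (fun i => f i i) n,
      Finset.sum_range_succ (fun i => ∑ j ∈ range i, f j i) n]
    rw [Finset.sum_congr rfl (fun j (_ : j ∈ range n) => hsym n j)]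
    ring

lemma tri_swap (f : ℕ → ℕ → ℝ) :
    ∀ n, ∑ i ∈ range n, ∑ j ∈ range i, f j i
      = ∑ j ∈ range n, ∑ i ∈ Finset.Ico (j+1) n, f j i := by
  intro n
  induction n with
  | zero => simp
  | succ n ih =>
    have hR : ∑ j ∈ range (n+1), ∑ i ∈ Finset.Ico (j+1) (n+1), f j i
        = (∑ j ∈ range n, ∑ i ∈ Finset.Ico (j+1) n, f j i) + ∑ j ∈ range n, f j n := by
      rw [Finset.sum_range_succ, Finset.Ico_self, Finset.sum_empty, add_zero]
      rw [Finset.sum_congr rfl (fun j hj =>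
        Finset.sum_Ico_succ_top (Nat.succ_le_of_lt (Finset.mem_range.mp hj)) (f j))]
      rw [Finset.sum_add_distrib]
    rw [hR, Finset.sum_range_succ, ih]

lemma abel_id (e : ℕ → ℝ) :
    ∀ n, ∑ m ∈ range n, ∑ i ∈ range m, e i = ∑ i ∈ range n, ((n:ℝ) - 1 - i) * e i := by
  intro n
  induction n with
  | zero => simp
  | succ n ih =>
    rw [Finset.sum_range_succ, ih, Finset.sum_range_succ]
    push_cast
    rw [Finset.sum_congr rfl (fun i (_ : i ∈ range n) =>
      show ((n:ℝ) + 1 - 1 - i) * e i = ((n:ℝ) - 1 - i) * e i + e i by ring)]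
    rw [Finset.sum_add_distrib]
    ring

lemma gauss_id : ∀ n : ℕ, ∑ j ∈ range n, ((n:ℝ) - 1 - j) = n * (n - 1) / 2 := by
  intro n
  induction n with
  | zero => simp
  | succ n ih =>
    rw [Finset.sum_range_succ]
    push_cast
    rw [Finset.sum_congr rfl (fun i (_ : i ∈ range n) =>
      show ((n:ℝ) + 1 - 1 - i) = ((n:ℝ) - 1 - i) + 1 by ring)]
    rw [Finset.sum_add_distrib, ih]
    simp
    ring

lemma arith_var_bound (pR qR : ℕ → ℝ) (rr : ℕ → ℕ → ℝ) (Js C : ℝ)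
    (hp0 : ∀ i, 0 ≤ pR i) (hp1 : ∀ i, pR i ≤ 1)
    (hJ0 : 0 ≤ Js) (hJ1 : Js ≤ 1) (hC : 0 ≤ C)
    (hTp : ∀ m, |∑ i ∈ range m, (pR i - Js)| ≤ C)
    (hTq : ∀ m, |∑ k ∈ range m, (qR (k+1) - Js)| ≤ C + 2)
    (hdiag : ∀ i, rr i i = pR i)
    (hsym : ∀ i j, rr i j = rr j i)
    (hoff : ∀ i j, i < j → rr i j = pR i * qR (j - i)) :
    ∀ n : ℕ, (∑ i ∈ range n, ∑ j ∈ range n, rr i j)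
        - 2*n*Js*(∑ i ∈ range n, pR i) + (n*Js)^2 ≤ (5 + 10*C) * n := by
  intro n
  rcases Nat.eq_zero_or_pos n with hn | hn
  · subst hn; simp
  -- decompose the double sum
  rw [sym_double rr hsym n, tri_swap rr n]
  -- inner sums
  have hinner : ∀ j ∈ range n, ∑ i ∈ Finset.Ico (j+1) n, rr j i
      = pR j * (((n - (j+1) : ℕ) : ℝ) * Js + ∑ k ∈ range (n - (j+1)), (qR (k+1) - Js)) := by
    intro j hj
    rw [Finset.sum_Ico_eq_sum_range]
    rw [Finset.sum_congr rfl (fun k hk => hoff j (j+1+k) (by omega))]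
    rw [Finset.sum_congr rfl (fun k hk => by rw [show j+1+k-j = k+1 from by omega])]
    rw [← Finset.mul_sum]
    congr 1
    rw [Finset.sum_sub_distrib]
    simp [Finset.sum_const, mul_comm]
  rw [Finset.sum_congr rfl hinner]
  -- split
  have hsplit : ∑ j ∈ range n, pR j * (((n - (j+1) : ℕ) : ℝ) * Js + ∑ k ∈ range (n - (j+1)), (qR (k+1) - Js))
      = Js * (∑ j ∈ range n, ((n:ℝ) - 1 - j) * pR j)
        + ∑ j ∈ range n, pR j * (∑ k ∈ range (n - (j+1)), (qR (k+1) - Js)) := by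
    rw [Finset.mul_sum, ← Finset.sum_add_distrib]
    apply Finset.sum_congr rfl
    intro j hj
    have hcast : ((n - (j+1) : ℕ) : ℝ) = (n:ℝ) - 1 - j := by
      have hj' : j < n := Finset.mem_range.mp hj
      push_cast [Nat.cast_sub (by omega : j+1 ≤ n)]
      ring
    rw [hcast]; ring
  rw [hsplit]
  -- second piece bound
  set ρ := ∑ j ∈ range n, pR j * (∑ k ∈ range (n - (j+1)), (qR (k+1) - Js)) with hρ
  have hρb : |ρ| ≤ n * (C + 2) := by
    calc |ρ| ≤ ∑ j ∈ range n, |pR j * (∑ k ∈ range (n - (j+1)), (qR (k+1) - Js))| :=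
          Finset.abs_sum_le_sum_abs _ _
      _ ≤ ∑ j ∈ range n, (C + 2) := by
          apply Finset.sum_le_sum
          intro j _
          rw [abs_mul]
          calc |pR j| * |∑ k ∈ range (n - (j+1)), (qR (k+1) - Js)| ≤ 1 * (C+2) := by
                apply mul_le_mul
                · rw [abs_of_nonneg (hp0 j)]; exact hp1 j
                · exact hTq _
                · exact abs_nonneg _
                · norm_num
            _ = C + 2 := one_mul _
      _ = n * (C + 2) := by rw [Finset.sum_const, Finset.card_range, nsmul_eq_mul]
  -- first piece: sum of (n-1-j) pR j
  have hW : ∑ j ∈ range n, ((n:ℝ) - 1 - j) * pR j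
      = Js * ((n:ℝ) * ((n:ℝ) - 1) / 2) + ∑ m ∈ range n, ∑ i ∈ range m, (pR i - Js) := by
    rw [abel_id (fun i => pR i - Js) n]
    rw [Finset.sum_congr rfl (fun j (_ : j ∈ range n) =>
      show ((n:ℝ) - 1 - j) * (pR j - Js) = ((n:ℝ) - 1 - j) * pR j - ((n:ℝ) - 1 - j) * Js by ring)]
    rw [Finset.sum_sub_distrib, ← Finset.sum_mul, gauss_id n]
    ring
  have hWb : |∑ m ∈ range n, ∑ i ∈ range m, (pR i - Js)| ≤ n * C := by
    calc |∑ m ∈ range n, ∑ i ∈ range m, (pR i - Js)|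
        ≤ ∑ m ∈ range n, |∑ i ∈ range m, (pR i - Js)| := Finset.abs_sum_le_sum_abs _ _
      _ ≤ ∑ m ∈ range n, C := Finset.sum_le_sum (fun m _ => hTp m)
      _ = n * C := by rw [Finset.sum_const, Finset.card_range, nsmul_eq_mul]
  -- E = n Js + S1
  have hE : ∑ i ∈ range n, pR i = n * Js + ∑ i ∈ range n, (pR i - Js) := by
    rw [Finset.sum_sub_distrib, Finset.sum_const, Finset.card_range, nsmul_eq_mul]
    ring
  set S1 := ∑ i ∈ range n, (pR i - Js) with hS1
  set W := ∑ m ∈ range n, ∑ i ∈ range m, (pR i - Js) with hWdef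
  have hS1b : |S1| ≤ C := hTp n
  -- assemble
  rw [Finset.sum_congr rfl (fun i (_ : i ∈ range n) => hdiag i), hE, hW]
  have expand : (n * Js + S1)
      + 2 * (Js * (Js * ((n:ℝ) * ((n:ℝ) - 1) / 2) + W) + ρ)
      - 2*n*Js*(n * Js + S1) + (n*Js)^2
      = n * Js - n * Js^2 + S1 + 2*Js*W + 2*ρ - 2*n*Js*S1 := by ring
  rw [expand]
  have hn1 : (1:ℝ) ≤ n := by exact_mod_cast hn
  have h1 : (n:ℝ) * Js - n * Js^2 ≤ n := by nlinarith
  have h2 : S1 ≤ C := (abs_le.mp hS1b).2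
  have h3 : 2*Js*W ≤ 2 * (n * C) := by
    have := (abs_le.mp hWb).2
    nlinarith [abs_nonneg W, (abs_le.mp hWb).1]
  have h4 : 2*ρ ≤ 2 * (n * (C+2)) := by linarith [(abs_le.mp hρb).2]
  have h5 : -(2*n*Js*S1) ≤ 2 * n * C := by
    have hmS : -S1 ≤ C := by linarith [(abs_le.mp hS1b).1]
    have ha : (0:ℝ) ≤ 2*(n:ℝ)*Js := by positivity
    have hb : 2*(n:ℝ)*Js*(-S1) ≤ 2*(n:ℝ)*Js*C := mul_le_mul_of_nonneg_left hmS ha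
    have hc : 2*(n:ℝ)*Js*C ≤ 2*(n:ℝ)*C := by
      have h := mul_le_mul_of_nonneg_right
        (mul_le_mul_of_nonneg_left hJ1 (by positivity : (0:ℝ) ≤ 2*(n:ℝ))) hC
      nlinarith
    nlinarith
  have hCn : C ≤ n * C := by nlinarith
  nlinarith


lemma nat_sqrt_tendsto : Tendsto (fun n : ℕ => Nat.sqrt n) atTop atTop := by
  apply tendsto_atTop_atTop.mpr
  intro b
  exact ⟨b^2, fun a ha => by
    have := Nat.sqrt_le_sqrt ha
    simpa [Nat.sqrt_eq' b] using this⟩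

lemma ratio_up_tendsto : Tendsto (fun k : ℕ => (((k:ℝ)+1)/(k:ℝ))^2) atTop (nhds 1) := by
  have h1 : Tendsto (fun k : ℕ => 1 + 1/(k:ℝ)) atTop (nhds 1) := by
    have := tendsto_one_div_atTop_nhds_zero_nat (𝕜 := ℝ)
    have h := tendsto_const_nhds (x := (1:ℝ)) (f := atTop (α := ℕ)) |>.add this
    simpa using h
  have h2 : Tendsto (fun k : ℕ => (1 + 1/(k:ℝ))^2) atTop (nhds 1) := by
    have := h1.pow 2
    simpa using this
  apply h2.congr'
  filter_upwards [eventually_ge_atTop 1] with k hk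
  have hk0 : (k:ℝ) ≠ 0 := by positivity
  field_simp

lemma ratio_down_tendsto : Tendsto (fun k : ℕ => ((k:ℝ)/((k:ℝ)+1))^2) atTop (nhds 1) := by
  have h1 : Tendsto (fun k : ℕ => 1/(1 + 1/(k:ℝ))) atTop (nhds 1) := by
    have h0 : Tendsto (fun k : ℕ => 1 + 1/(k:ℝ)) atTop (nhds 1) := by
      have := tendsto_one_div_atTop_nhds_zero_nat (𝕜 := ℝ)
      have h := tendsto_const_nhds (x := (1:ℝ)) (f := atTop (α := ℕ)) |>.add this
      simpa using h
    have := h0.inv₀ (by norm_num)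
    simpa [one_div] using this
  have h2 := h1.pow 2
  simp only [one_pow] at h2
  apply h2.congr'
  filter_upwards [eventually_ge_atTop 1] with k hk
  have hk0 : (k:ℝ) ≠ 0 := by positivity
  have hk1 : (k:ℝ) + 1 ≠ 0 := by positivity
  field_simp

/-- From convergence along squares to convergence, for monotone nonnegative sequences. -/
lemma sandwich_squares (a : ℕ → ℝ) (L : ℝ) (hmono : Monotone a) (hnn : ∀ n, 0 ≤ a n)
    (hsq : Tendsto (fun k : ℕ => a (k^2) / ((k:ℝ)^2)) atTop (nhds L)) :
    Tendsto (fun n : ℕ => a n / (n:ℝ)) atTop (nhds L) := by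
  -- upper and lower comparison sequences
  have hup : Tendsto (fun k : ℕ => a ((k+1)^2) / ((k:ℝ)^2)) atTop (nhds L) := by
    have hshift : Tendsto (fun k : ℕ => a ((k+1)^2) / (((k:ℝ)+1)^2)) atTop (nhds L) := by
      have := (tendsto_add_atTop_iff_nat 1).mpr hsq
      apply this.congr
      intro k
      push_cast
      ring_nf
    have := hshift.mul ratio_up_tendsto
    rw [mul_one] at this
    apply this.congr'
    filter_upwards [eventually_ge_atTop 1] with k hk
    have hk0 : (k:ℝ) ≠ 0 := by positivity
    have hk1 : ((k:ℝ)+1) ≠ 0 := by positivity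
    field_simp
  have hdown : Tendsto (fun k : ℕ => a (k^2) / (((k:ℝ)+1)^2)) atTop (nhds L) := by
    have := hsq.mul ratio_down_tendsto
    rw [mul_one] at this
    apply this.congr'
    filter_upwards [eventually_ge_atTop 1] with k hk
    have hk0 : (k:ℝ) ≠ 0 := by positivity
    have hk1 : ((k:ℝ)+1) ≠ 0 := by positivity
    field_simp
  -- compose with sqrt
  have hupc : Tendsto (fun n : ℕ => a ((Nat.sqrt n + 1)^2) / ((Nat.sqrt n : ℝ)^2)) atTop (nhds L) :=
    hup.comp nat_sqrt_tendsto
  have hdownc : Tendsto (fun n : ℕ => a ((Nat.sqrt n)^2) / (((Nat.sqrt n : ℝ)+1)^2)) atTop (nhds L) :=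
    hdown.comp nat_sqrt_tendsto
  apply tendsto_of_tendsto_of_tendsto_of_le_of_le' hdownc hupc
  · filter_upwards [eventually_ge_atTop 1] with n hn
    set k := Nat.sqrt n with hk
    have h1 : k^2 ≤ n := Nat.sqrt_le' n
    have h2 : n < (k+1)^2 := Nat.lt_succ_sqrt' n
    have hkpos : 0 < k := Nat.sqrt_pos.mpr hn
    have hnR : (0:ℝ) < n := by exact_mod_cast hn
    have hle : (n:ℝ) ≤ ((k:ℝ)+1)^2 := by
      have : (n:ℝ) ≤ (((k+1)^2 : ℕ) : ℝ) := by exact_mod_cast Nat.le_of_lt h2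
      push_cast at this
      linarith
    calc a (k^2) / ((k:ℝ)+1)^2 ≤ a (k^2) / (n:ℝ) :=
          div_le_div_of_nonneg_left (hnn _) hnR hle
      _ ≤ a n / (n:ℝ) := by
          apply div_le_div_of_nonneg_right ?_ (le_of_lt hnR)
          exact hmono h1
  · filter_upwards [eventually_ge_atTop 1] with n hn
    set k := Nat.sqrt n with hk
    have h1 : k^2 ≤ n := Nat.sqrt_le' n
    have h2 : n < (k+1)^2 := Nat.lt_succ_sqrt' n
    have hkpos : 0 < k := Nat.sqrt_pos.mpr hn
    have hnR : (0:ℝ) < n := by exact_mod_cast hn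
    have hkR : (0:ℝ) < (k:ℝ)^2 := by
      have : (0:ℝ) < (k:ℝ) := by exact_mod_cast hkpos
      positivity
    have hle : ((k:ℝ))^2 ≤ (n:ℝ) := by
      have : (((k^2 : ℕ)) : ℝ) ≤ (n:ℝ) := by exact_mod_cast h1
      push_cast at this
      linarith
    calc a n / (n:ℝ) ≤ a ((k+1)^2) / (n:ℝ) := by
          apply div_le_div_of_nonneg_right ?_ (le_of_lt hnR)
          exact hmono (Nat.le_of_lt h2)
      _ ≤ a ((k+1)^2) / ((k:ℝ)^2) :=
          div_le_div_of_nonneg_left (hnn _) hkR hle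



lemma ae_tendsto_squares {Ω : Type*} [MeasurableSpace Ω] (μ : Measure Ω)
    [IsProbabilityMeasure μ] (N : ℕ → Ω → ℝ) (hNmeas : ∀ n, Measurable (N n))
    (Js C2 : ℝ) (hC2 : 0 ≤ C2)
    (hint : ∀ n : ℕ, Integrable (fun w => (N n w - n*Js)^2) μ)
    (hvar : ∀ n : ℕ, ∫ w, (N n w - n*Js)^2 ∂μ ≤ C2 * n) :
    ∀ᵐ w ∂μ, Tendsto (fun k : ℕ => N (k^2) w / ((k:ℝ)^2)) atTop (nhds Js) := by
  set Y : ℕ → Ω → ℝ := fun k w => N ((k+1)^2) w / (((k:ℝ)+1)^2) - Js with hY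
  have hYeq : ∀ k w, Y k w ^ 2
      = (1/(((k:ℝ)+1)^2)^2) * (N ((k+1)^2) w - (((k+1)^2 : ℕ) : ℝ)*Js)^2 := by
    intro k w
    have hk : ((k:ℝ)+1) ≠ 0 := by positivity
    rw [hY]
    push_cast
    field_simp
  have hYint : ∀ k, Integrable (fun w => Y k w ^ 2) μ := by
    intro k
    have := (hint ((k+1)^2)).const_mul (1/(((k:ℝ)+1)^2)^2)
    apply this.congr
    filter_upwards with w
    rw [hYeq k w]
  have hYvar : ∀ k, ∫ w, Y k w ^ 2 ∂μ ≤ C2 / ((k:ℝ)+1)^2 := by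
    intro k
    have h1 : ∫ w, Y k w ^ 2 ∂μ
        = (1/(((k:ℝ)+1)^2)^2) * ∫ w, (N ((k+1)^2) w - (((k+1)^2 : ℕ) : ℝ)*Js)^2 ∂μ := by
      rw [← integral_const_mul]
      apply integral_congr_ae
      filter_upwards with w
      rw [hYeq k w]
    rw [h1]
    have h2 := hvar ((k+1)^2)
    have hk : (0:ℝ) < ((k:ℝ)+1)^2 := by positivity
    have h3 : (1/(((k:ℝ)+1)^2)^2) * ∫ w, (N ((k+1)^2) w - (((k+1)^2 : ℕ) : ℝ)*Js)^2 ∂μ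
        ≤ (1/(((k:ℝ)+1)^2)^2) * (C2 * (((k+1)^2 : ℕ) : ℝ)) := by
      apply mul_le_mul_of_nonneg_left (h2) (by positivity)
    calc _ ≤ (1/(((k:ℝ)+1)^2)^2) * (C2 * (((k+1)^2 : ℕ) : ℝ)) := h3
      _ = C2 / ((k:ℝ)+1)^2 := by
          push_cast
          field_simp
  have hYmeas : ∀ k, Measurable (fun w => ENNReal.ofReal (Y k w ^ 2)) := by
    intro k
    exact ((((hNmeas ((k+1)^2)).div_const _).sub_const Js).pow_const 2).ennreal_ofReal
  -- summability of the variance series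
  have hsummable : Summable (fun k : ℕ => C2 / ((k:ℝ)+1)^2) := by
    have hbase : Summable (fun n : ℕ => C2 * (1/(n:ℝ)^2)) :=
      (Real.summable_one_div_nat_pow.mpr (by norm_num)).mul_left C2
    have hshift := (summable_nat_add_iff 1).mpr hbase
    apply hshift.congr
    intro k
    push_cast
    ring
  have htsum_fin : (∑' k : ℕ, ENNReal.ofReal (C2 / ((k:ℝ)+1)^2)) < ⊤ := by
    rw [← ENNReal.ofReal_tsum_of_nonneg (fun k => by positivity) hsummable]
    exact ENNReal.ofReal_lt_top
  have hlin : (∑' k : ℕ, ∫⁻ w, ENNReal.ofReal (Y k w ^ 2) ∂μ) < ⊤ := by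
    apply lt_of_le_of_lt _ htsum_fin
    apply ENNReal.tsum_le_tsum
    intro k
    rw [← ofReal_integral_eq_lintegral_ofReal (hYint k)
      (Filter.Eventually.of_forall (fun w => sq_nonneg _))]
    exact ENNReal.ofReal_le_ofReal (hYvar k)
  have hlintegral : ∫⁻ w, (∑' k : ℕ, ENNReal.ofReal (Y k w ^ 2)) ∂μ < ⊤ := by
    rw [lintegral_tsum (fun k => (hYmeas k).aemeasurable)]
    exact hlin
  have hae := ae_lt_top (Measurable.ennreal_tsum hYmeas) hlintegral.ne
  filter_upwards [hae] with w hw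
  -- terms of a finite tsum go to 0
  have hterms : Tendsto (fun k => ENNReal.ofReal (Y k w ^ 2)) atTop (nhds 0) :=
    ENNReal.tendsto_atTop_zero_of_tsum_ne_top hw.ne
  have hsq0 : Tendsto (fun k => Y k w ^ 2) atTop (nhds 0) := by
    have hto := (ENNReal.tendsto_toReal (by simp : (0:ℝ≥0∞) ≠ ⊤)).comp hterms
    simp only [ENNReal.toReal_zero] at hto
    apply hto.congr
    intro k
    exact ENNReal.toReal_ofReal (sq_nonneg _)
  have habs : Tendsto (fun k => |Y k w|) atTop (nhds 0) := by
    have hsqrt := (Real.continuous_sqrt.tendsto 0).comp hsq0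
    simp only [Real.sqrt_zero] at hsqrt
    apply hsqrt.congr
    intro k
    exact Real.sqrt_sq_eq_abs _
  have hY0 : Tendsto (fun k => Y k w) atTop (nhds 0) := by
    have hneg : Tendsto (fun k => -|Y k w|) atTop (nhds 0) := by
      have := habs.neg; rwa [neg_zero] at this
    exact tendsto_of_tendsto_of_tendsto_of_le_of_le hneg habs
      (fun k => neg_abs_le _) (fun k => le_abs_self _)
  have hfinal : Tendsto (fun k : ℕ => N ((k+1)^2) w / (((k:ℝ)+1)^2)) atTop (nhds Js) := by
    have := hY0.add_const Js
    rw [zero_add] at this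
    apply this.congr
    intro k
    rw [hY]
    ring
  rw [← tendsto_add_atTop_iff_nat 1]
  apply hfinal.congr
  intro k
  push_cast
  ring_nf



variable {Ω : Type*} [MeasurableSpace Ω] (μ : Measure Ω) [IsProbabilityMeasure μ]
  (A : ℕ → Set Ω)

set_option linter.unusedSectionVars false

lemma ind_integrable (hA : ∀ i, MeasurableSet (A i)) (i : ℕ) : Integrable (Set.indicator (A i) (fun _ => (1:ℝ))) μ := by
  rw [integrable_indicator_iff (hA i)]
  exact integrableOn_const (measure_ne_top μ _)

lemma ind_mul_eq (i j : ℕ) :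
    (fun w => Set.indicator (A i) (fun _ => (1:ℝ)) w * Set.indicator (A j) (fun _ => (1:ℝ)) w)
      = Set.indicator (A i ∩ A j) (fun _ => (1:ℝ)) := by
  funext w
  by_cases hi : w ∈ A i <;> by_cases hj : w ∈ A j <;>
    simp [Set.indicator_apply, hi, hj, Set.mem_inter_iff]

lemma ind_mul_integrable (hA : ∀ i, MeasurableSet (A i)) (i j : ℕ) :
    Integrable (fun w => Set.indicator (A i) (fun _ => (1:ℝ)) w
      * Set.indicator (A j) (fun _ => (1:ℝ)) w) μ := by
  rw [ind_mul_eq A i j, integrable_indicator_iff ((hA i).inter (hA j))]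
  exact integrableOn_const (measure_ne_top μ _)

lemma sq_sum_expand (c : ℝ) (n : ℕ) :
    (fun w => ((∑ i ∈ range n, Set.indicator (A i) (fun _ => (1:ℝ)) w) - c)^2)
      = fun w => (∑ i ∈ range n, ∑ j ∈ range n,
          Set.indicator (A i) (fun _ => (1:ℝ)) w * Set.indicator (A j) (fun _ => (1:ℝ)) w)
        - 2*c*(∑ i ∈ range n, Set.indicator (A i) (fun _ => (1:ℝ)) w) + c^2 := by
  funext w
  rw [← Finset.sum_mul_sum]
  ring

lemma sq_sum_integrable (hA : ∀ i, MeasurableSet (A i)) (c : ℝ) (n : ℕ) :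
    Integrable (fun w => ((∑ i ∈ range n, Set.indicator (A i) (fun _ => (1:ℝ)) w) - c)^2) μ := by
  rw [sq_sum_expand A c n]
  have I1 : Integrable (fun w => ∑ i ∈ range n, ∑ j ∈ range n,
      Set.indicator (A i) (fun _ => (1:ℝ)) w * Set.indicator (A j) (fun _ => (1:ℝ)) w) μ :=
    integrable_finset_sum _ (fun i _ => integrable_finset_sum _
      (fun j _ => ind_mul_integrable μ A hA i j))
  have I2 : Integrable (fun w => 2*c*(∑ i ∈ range n,
      Set.indicator (A i) (fun _ => (1:ℝ)) w)) μ :=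
    (integrable_finset_sum _ (fun i _ => ind_integrable μ A hA i)).const_mul (2*c)
  have I12 : Integrable (fun w => (∑ i ∈ range n, ∑ j ∈ range n,
      Set.indicator (A i) (fun _ => (1:ℝ)) w * Set.indicator (A j) (fun _ => (1:ℝ)) w)
        - 2*c*(∑ i ∈ range n, Set.indicator (A i) (fun _ => (1:ℝ)) w)) μ := I1.sub I2
  exact I12.add (integrable_const _)

lemma moment_formula (hA : ∀ i, MeasurableSet (A i)) (c : ℝ) (n : ℕ) :
    ∫ w, ((∑ i ∈ range n, Set.indicator (A i) (fun _ => (1:ℝ)) w) - c)^2 ∂μ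
      = (∑ i ∈ range n, ∑ j ∈ range n, (μ (A i ∩ A j)).toReal)
        - 2*c*(∑ i ∈ range n, (μ (A i)).toReal) + c^2 := by
  rw [sq_sum_expand A c n]
  have I1 : Integrable (fun w => ∑ i ∈ range n, ∑ j ∈ range n,
      Set.indicator (A i) (fun _ => (1:ℝ)) w * Set.indicator (A j) (fun _ => (1:ℝ)) w) μ :=
    integrable_finset_sum _ (fun i _ => integrable_finset_sum _
      (fun j _ => ind_mul_integrable μ A hA i j))
  have I2 : Integrable (fun w => 2*c*(∑ i ∈ range n,
      Set.indicator (A i) (fun _ => (1:ℝ)) w)) μ :=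
    (integrable_finset_sum _ (fun i _ => ind_integrable μ A hA i)).const_mul (2*c)
  have I12 : Integrable (fun w => (∑ i ∈ range n, ∑ j ∈ range n,
      Set.indicator (A i) (fun _ => (1:ℝ)) w * Set.indicator (A j) (fun _ => (1:ℝ)) w)
        - 2*c*(∑ i ∈ range n, Set.indicator (A i) (fun _ => (1:ℝ)) w)) μ := I1.sub I2
  rw [integral_add I12 (integrable_const _), integral_sub I1 I2]
  congr 1
  · congr 1
    · rw [integral_finset_sum _ (fun i _ => integrable_finset_sum _
        (fun j _ => ind_mul_integrable μ A hA i j))]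
      apply Finset.sum_congr rfl
      intro i _
      rw [integral_finset_sum _ (fun j _ => ind_mul_integrable μ A hA i j)]
      apply Finset.sum_congr rfl
      intro j _
      rw [show (fun w => Set.indicator (A i) (fun _ => (1:ℝ)) w
          * Set.indicator (A j) (fun _ => (1:ℝ)) w)
          = Set.indicator (A i ∩ A j) (fun _ => (1:ℝ)) from ind_mul_eq A i j]
      rw [integral_indicator_const (1:ℝ) ((hA i).inter (hA j))]
      simp [measureReal_def]
    · rw [integral_const_mul, integral_finset_sum _ (fun i _ => ind_integrable μ A hA i)]
      congr 1
      apply Finset.sum_congr rfl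
      intro i _
      rw [integral_indicator_const (1:ℝ) (hA i)]
      simp [measureReal_def]
  · simp


end FreqAux

open FreqAux in
/-- ergodic theorem for finite irreducible Markov chains.
For any Markov-chain measure on runs with irreducible transition matrix `P`
and any initial distribution `ν`, the empirical frequency vector converges
almost surely to the unique invariant distribution `I`. -/
theorem freq_tendsto_invariant_ae {B : Type*} [Fintype B] [Nonempty B] [DecidableEq B]
    [MeasurableSpace B] [MeasurableSingletonClass B]
    (P : Matrix B B ℝ≥0) (hP : ∀ s, ∑ t, P s t = 1)
    (hirr : ∀ s t : B, ∃ n : ℕ, 0 < (P ^ n) s t)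
    (I : B → ℝ≥0) (hI1 : ∑ s, I s = 1) (hinv : ∀ t, ∑ s, I s * P s t = I t)
    (ν : B → ℝ≥0) (hν : ∑ s, ν s = 1)
    (μ : MeasureTheory.Measure (ℕ → B)) [MeasureTheory.IsProbabilityMeasure μ]
    (hcyl : ∀ (k : ℕ) (p : ℕ → B),
      μ {w | ∀ i ≤ k, w i = p i} =
        (ν (p 0) : ℝ≥0∞) * ∏ i ∈ Finset.range k, (P (p i) (p (i + 1)) : ℝ≥0∞)) :
    μ {w : ℕ → B | ∀ s : B, Filter.Tendsto
        (fun n : ℕ => (((Finset.range n).filter fun i => w i = s).card : ℝ) / n)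
        Filter.atTop (nhds (I s : ℝ))} = 1 := by
  classical
  set Q : Matrix B B ℝ := P.map ((↑) : ℝ≥0 → ℝ) with hQdef
  have hmap : ∀ k : ℕ, Q^k = (P^k).map ((↑) : ℝ≥0 → ℝ) := by
    intro k
    induction k with
    | zero =>
      rw [pow_zero, pow_zero]
      exact (Matrix.map_one _ NNReal.coe_zero NNReal.coe_one).symm
    | succ k ih =>
      ext u v
      rw [pow_succ, pow_succ, Matrix.mul_apply, Matrix.map_apply, Matrix.mul_apply]
      push_cast
      apply Finset.sum_congr rfl
      intro u' _
      rw [ih, Matrix.map_apply]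
      rfl
  set J : B → ℝ := fun t => (I t : ℝ) with hJdef
  have hQ0 : ∀ a b, 0 ≤ Q a b := fun a b => (P a b).coe_nonneg
  have hQ1 : ∀ a, ∑ b, Q a b = 1 := by
    intro a
    have h : ∑ b, Q a b = ((∑ b, P a b : ℝ≥0) : ℝ) := by
      rw [NNReal.coe_sum]; rfl
    rw [h, hP a, NNReal.coe_one]
  have hQirr : ∀ a b, ∃ n, 0 < (Q^n) a b := by
    intro a b
    obtain ⟨n, hn⟩ := hirr a b
    exact ⟨n, by rw [hmap n, Matrix.map_apply]; exact_mod_cast hn⟩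
  have hJ1 : ∑ a, J a = 1 := by
    have h : ∑ a, J a = ((∑ a, I a : ℝ≥0) : ℝ) := by rw [NNReal.coe_sum]
    rw [h, hI1, NNReal.coe_one]
  have hJinv : ∀ b, ∑ a, J a * Q a b = J b := by
    intro b
    have h : ∑ a, J a * Q a b = ((∑ a, I a * P a b : ℝ≥0) : ℝ) := by
      rw [NNReal.coe_sum]
      exact Finset.sum_congr rfl (fun a _ => by rw [NNReal.coe_mul]; rfl)
    rw [h, hinv b]
  obtain ⟨C, hC0, hCb⟩ := fundamental_bound Q J hQ0 hQ1 hQirr hJ1 hJinv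
  have hν1 : ∑ u, ((ν u : ℝ)) = 1 := by
    have h : ∑ u, ((ν u : ℝ)) = ((∑ u, ν u : ℝ≥0) : ℝ) := by rw [NNReal.coe_sum]
    rw [h, hν, NNReal.coe_one]
  -- per-state a.e. convergence
  have haes : ∀ s : B, ∀ᵐ w ∂μ, Filter.Tendsto
      (fun n : ℕ => (((Finset.range n).filter fun i => w i = s).card : ℝ) / n)
      Filter.atTop (nhds (I s : ℝ)) := by
    intro s
    set A : ℕ → Set (ℕ → B) := fun i => {w : ℕ → B | w i = s} with hAdef
    have hA : ∀ i, MeasurableSet (A i) := by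
      intro i
      have heq : A i = (fun w : ℕ → B => w i) ⁻¹' {s} := by
        ext w
        simp [hAdef]
      rw [heq]
      exact (measurable_pi_apply i) (measurableSet_singleton s)
    set Js : ℝ := (I s : ℝ) with hJsdef
    set pR : ℕ → ℝ := fun i => ((Matrix.vecMul ν (P^i)) s : ℝ) with hpRdef
    set qR : ℕ → ℝ := fun k => ((P^k) s s : ℝ) with hqRdef
    set rr : ℕ → ℕ → ℝ := fun i j => (μ (A i ∩ A j)).toReal with hrrdef
    have hprμ : ∀ i, (μ (A i)).toReal = pR i := by
      intro i
      rw [show A i = {w : ℕ → B | w i = s} from rfl, measure_coord P ν μ hcyl i s,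
        ENNReal.coe_toReal]
    have hrrle : ∀ i j, i ≤ j → rr i j = pR i * qR (j - i) := by
      intro i j hij
      have hseteq : A i ∩ A j = {w : ℕ → B | w i = s ∧ w (i + (j - i)) = s} := by
        rw [Nat.add_sub_cancel' hij]
        rfl
      show (μ (A i ∩ A j)).toReal = _
      rw [hseteq, measure_pair P ν μ hcyl i (j-i) s s, ENNReal.toReal_mul,
        ENNReal.coe_toReal, ENNReal.coe_toReal]
    have hq0 : qR 0 = 1 := by
      show ((P^0) s s : ℝ) = 1
      rw [pow_zero, Matrix.one_apply_eq, NNReal.coe_one]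
    have hdiag : ∀ i, rr i i = pR i := by
      intro i
      rw [hrrle i i le_rfl, Nat.sub_self, hq0, mul_one]
    have hsym : ∀ i j, rr i j = rr j i := by
      intro i j
      show (μ (A i ∩ A j)).toReal = (μ (A j ∩ A i)).toReal
      rw [Set.inter_comm]
    have hp0 : ∀ i, 0 ≤ pR i := fun i => ((Matrix.vecMul ν (P^i)) s).coe_nonneg
    have hp1 : ∀ i, pR i ≤ 1 := by
      intro i
      rw [← hprμ i]
      calc (μ (A i)).toReal ≤ (μ Set.univ).toReal :=
            ENNReal.toReal_mono (measure_ne_top μ _) (measure_mono (Set.subset_univ _))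
        _ = 1 := by rw [measure_univ, ENNReal.toReal_one]
    have hJ0s : 0 ≤ Js := (I s).coe_nonneg
    have hJ1s : Js ≤ 1 := by
      have h := Finset.single_le_sum (f := fun a => I a) (fun a _ => by positivity)
        (Finset.mem_univ s)
      rw [hI1] at h
      exact_mod_cast h
    have hpRQ : ∀ i, pR i = ∑ u, (ν u : ℝ) * (Q^i) u s := by
      intro i
      have h1 : (Matrix.vecMul ν (P^i)) s = ∑ u, ν u * (P^i) u s := by
        simp [Matrix.vecMul, dotProduct]
      show ((Matrix.vecMul ν (P^i)) s : ℝ) = _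
      rw [h1, NNReal.coe_sum]
      apply Finset.sum_congr rfl
      intro u _
      rw [NNReal.coe_mul, hmap i, Matrix.map_apply]
    have hqRQ : ∀ k, qR k = (Q^k) s s := by
      intro k
      show ((P^k) s s : ℝ) = (Q^k) s s
      rw [hmap k, Matrix.map_apply]
    have hTp : ∀ m, |∑ i ∈ range m, (pR i - Js)| ≤ C := by
      intro m
      have hstep : ∀ i, pR i - Js = ∑ u, (ν u : ℝ) * ((Q^i) u s - J s) := by
        intro i
        rw [hpRQ i]
        rw [Finset.sum_congr rfl (fun u _ => mul_sub ((ν u : ℝ)) ((Q^i) u s) (J s)),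
          Finset.sum_sub_distrib, ← Finset.sum_mul, hν1, one_mul]
      rw [Finset.sum_congr rfl (fun i _ => hstep i), Finset.sum_comm]
      rw [Finset.sum_congr rfl (fun u (_ : u ∈ univ) => (Finset.mul_sum _ _ _).symm)]
      calc |∑ u, (ν u : ℝ) * (∑ i ∈ range m, ((Q^i) u s - J s))|
          ≤ ∑ u, |(ν u : ℝ) * (∑ i ∈ range m, ((Q^i) u s - J s))| :=
            Finset.abs_sum_le_sum_abs _ _
        _ ≤ ∑ u, (ν u : ℝ) * C := by
            apply Finset.sum_le_sum
            intro u _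
            rw [abs_mul, abs_of_nonneg (ν u).coe_nonneg]
            exact mul_le_mul_of_nonneg_left (hCb m u s) (ν u).coe_nonneg
        _ = C := by rw [← Finset.sum_mul, hν1, one_mul]
    have hTq : ∀ m, |∑ k ∈ range m, (qR (k+1) - Js)| ≤ C + 2 := by
      intro m
      have h1 : ∑ k ∈ range (m+1), (qR k - Js)
          = (∑ k ∈ range m, (qR (k+1) - Js)) + (qR 0 - Js) :=
        Finset.sum_range_succ' _ m
      have h2 : |∑ k ∈ range (m+1), (qR k - Js)| ≤ C := by
        rw [Finset.sum_congr rfl (fun k (_ : k ∈ range (m+1)) => by rw [hqRQ k])]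
        exact hCb (m+1) s s
      have h4 : |∑ k ∈ range m, (qR (k+1) - Js)|
          ≤ |∑ k ∈ range (m+1), (qR k - Js)| + |qR 0 - Js| := by
        have heq : ∑ k ∈ range m, (qR (k+1) - Js)
            = (∑ k ∈ range (m+1), (qR k - Js)) - (qR 0 - Js) := by
          rw [h1]; ring
        rw [heq, sub_eq_add_neg]
        exact (abs_add_le _ _).trans (by rw [abs_neg])
      have h3 : |qR 0 - Js| ≤ 2 := by
        rw [hq0, abs_le]; constructor <;> linarith
      linarith
    have hvar : ∀ n : ℕ, ∫ w, ((∑ i ∈ range n, Set.indicator (A i) (fun _ => (1:ℝ)) w)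
        - (n:ℝ)*Js)^2 ∂μ ≤ (5 + 10*C) * n := by
      intro n
      rw [moment_formula μ A hA ((n:ℝ)*Js) n]
      have harith := arith_var_bound pR qR rr Js C hp0 hp1 hJ0s hJ1s hC0 hTp hTq hdiag hsym
        (fun i j hij => hrrle i j (le_of_lt hij)) n
      have he1 : ∑ i ∈ range n, (μ (A i)).toReal = ∑ i ∈ range n, pR i :=
        Finset.sum_congr rfl fun i _ => hprμ i
      have he2 : (∑ i ∈ range n, ∑ j ∈ range n, (μ (A i ∩ A j)).toReal)
          = ∑ i ∈ range n, ∑ j ∈ range n, rr i j := rfl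
      rw [he1, he2]
      have hshape : (∑ i ∈ range n, ∑ j ∈ range n, rr i j)
          - 2*((n:ℝ)*Js)*(∑ i ∈ range n, pR i) + ((n:ℝ)*Js)^2
          = (∑ i ∈ range n, ∑ j ∈ range n, rr i j)
          - 2*(n:ℝ)*Js*(∑ i ∈ range n, pR i) + ((n:ℝ)*Js)^2 := by ring
      rw [hshape]
      exact harith
    have hNmeas : ∀ n : ℕ, Measurable
        (fun w : ℕ → B => ∑ i ∈ range n, Set.indicator (A i) (fun _ => (1:ℝ)) w) :=
      fun n => Finset.measurable_sum _ (fun i _ => measurable_const.indicator (hA i))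
    have hint : ∀ n : ℕ, Integrable
        (fun w => ((∑ i ∈ range n, Set.indicator (A i) (fun _ => (1:ℝ)) w) - (n:ℝ)*Js)^2) μ :=
      fun n => sq_sum_integrable μ A hA ((n:ℝ)*Js) n
    have hae2 := ae_tendsto_squares μ
      (fun n w => ∑ i ∈ range n, Set.indicator (A i) (fun _ => (1:ℝ)) w)
      hNmeas Js (5+10*C) (by linarith) hint hvar
    filter_upwards [hae2] with w hw
    set a : ℕ → ℝ := fun n => ∑ i ∈ range n, Set.indicator (A i) (fun _ => (1:ℝ)) w with hadef
    have hmono : Monotone a := by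
      apply monotone_nat_of_le_succ
      intro n
      show (∑ i ∈ range n, Set.indicator (A i) (fun _ => (1:ℝ)) w)
        ≤ ∑ i ∈ range (n+1), Set.indicator (A i) (fun _ => (1:ℝ)) w
      rw [Finset.sum_range_succ]
      have := Set.indicator_nonneg (s := A n) (f := fun _ => (1:ℝ))
        (fun _ _ => by norm_num) w
      linarith
    have hnn : ∀ n, 0 ≤ a n :=
      fun n => Finset.sum_nonneg fun i _ =>
        Set.indicator_nonneg (fun _ _ => by norm_num) w
    have hconv := sandwich_squares a Js hmono hnn hw
    apply hconv.congr
    intro n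
    congr 1
    show a n = _
    rw [hadef]
    simp only
    rw [Finset.card_filter]
    push_cast
    apply Finset.sum_congr rfl
    intro i _
    by_cases h : w i = s
    · rw [if_pos h]
      have hw : w ∈ A i := h
      rw [Set.indicator_of_mem hw]
    · rw [if_neg h]
      have hw : w ∉ A i := h
      rw [Set.indicator_of_notMem hw]
  -- combine over all states
  have hall := (MeasureTheory.ae_all_iff).mpr haes
  rw [MeasureTheory.ae_iff] at hall
  set S := {w : ℕ → B | ∀ s : B, Filter.Tendsto
      (fun n : ℕ => (((Finset.range n).filter fun i => w i = s).card : ℝ) / n)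
      Filter.atTop (nhds (I s : ℝ))} with hS
  have hcomp : μ Sᶜ = 0 := by
    rw [hS, Set.compl_setOf]
    exact hall
  have hle : μ S ≤ 1 := prob_le_one
  have hge : (1:ℝ≥0∞) ≤ μ S := by
    have hu : μ Set.univ ≤ μ S + μ Sᶜ := by
      calc μ Set.univ = μ (S ∪ Sᶜ) := by rw [Set.union_compl_self]
        _ ≤ μ S + μ Sᶜ := measure_union_le _ _
    rw [measure_univ, hcomp, add_zero] at hu
    exact hu
  exact le_antisymm hle hge
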